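/- Let α, β ∈ ℝ, and let γ_k be the k-th derivative at 0 of the function x ↦ exp(−(α/2)x² − βx) on ℝ. Then for every n ≥ 0, Σ_{k=0}^n (γ_k/k!) D^k[x^n] = H_n^α(x − β), where H_n^α(x − β) denotes the composition of the generalized Hermite polynomial H_n^α with the polynomial x − β. -/

import Mathlib

open Polynomial Finset

lemma aux_hasDerivAt (α β x : ℝ) :
    HasDerivAt (fun x : ℝ => Real.exp (-(α / 2) * x ^ 2 - β * x))
      ((-α * x - β) * Real.exp (-(α / 2) * x ^ 2 - β * x)) x := by
  have h1 : HasDerivAt (fun x : ℝ => -(α / 2) * x ^ 2 - β * x) (-α * x - β) x := by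
    have h : HasDerivAt (fun x : ℝ => -(α / 2) * x ^ 2 - β * x)
        (-(α / 2) * (((2 : ℕ) : ℝ) * x ^ (2 - 1)) - β * 1) x := (((hasDerivAt_pow 2 x).const_mul (-(α/2))).sub ((hasDerivAt_id x).const_mul β))
    convert h using 1
    ring
  have := h1.exp
  convert this using 1
  ring

lemma aux_contDiff (α β : ℝ) :
    ContDiff ℝ ⊤ (fun x : ℝ => Real.exp (-(α / 2) * x ^ 2 - β * x)) := by
  fun_prop

lemma aux_iter1 (α β : ℝ) :
    iteratedDeriv 1 (fun x : ℝ => Real.exp (-(α / 2) * x ^ 2 - β * x)) =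
      fun x : ℝ => (-α * x - β) * Real.exp (-(α / 2) * x ^ 2 - β * x) := by
  ext x
  rw [iteratedDeriv_one]
  exact (aux_hasDerivAt α β x).deriv

lemma aux_iter (α β : ℝ) (k : ℕ) :
    iteratedDeriv (k + 2) (fun x : ℝ => Real.exp (-(α / 2) * x ^ 2 - β * x)) =
      fun x : ℝ => (-α * x - β) *
          iteratedDeriv (k + 1) (fun x : ℝ => Real.exp (-(α / 2) * x ^ 2 - β * x)) x
        - α * (k + 1) *
          iteratedDeriv k (fun x : ℝ => Real.exp (-(α / 2) * x ^ 2 - β * x)) x := by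
  set f : ℝ → ℝ := fun x : ℝ => Real.exp (-(α / 2) * x ^ 2 - β * x) with hf
  have hdiff : ∀ m : ℕ, Differentiable ℝ (iteratedDeriv m f) := fun m =>
    (aux_contDiff α β).differentiable_iteratedDeriv m (by exact_mod_cast WithTop.coe_lt_top _)
  have hderiv : ∀ (m : ℕ) (x : ℝ),
      HasDerivAt (iteratedDeriv m f) (iteratedDeriv (m + 1) f x) x := by
    intro m x
    have := (hdiff m x).hasDerivAt
    rwa [show deriv (iteratedDeriv m f) x = iteratedDeriv (m + 1) f x by
      rw [iteratedDeriv_succ]] at this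
  induction k with
  | zero =>
    ext x
    conv_lhs => rw [iteratedDeriv_succ, aux_iter1 α β]
    have hlin : HasDerivAt (fun x : ℝ => -α * x - β) (-α) x := by
      simpa using ((hasDerivAt_id x).const_mul (-α)).sub_const β
    have h : HasDerivAt (fun x => (-α * x - β) * f x)
        (-α * f x + (-α * x - β) * ((-α * x - β) * f x)) x :=
      hlin.mul (aux_hasDerivAt α β x)
    rw [h.deriv]
    have h1 : iteratedDeriv 1 f x = (-α * x - β) * f x := by rw [aux_iter1 α β]
    simp only [h1, iteratedDeriv_zero]
    push_cast
    ring
  | succ k ih =>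
    ext x
    conv_lhs => rw [iteratedDeriv_succ, ih]
    have hlin : HasDerivAt (fun x : ℝ => -α * x - β) (-α) x := by
      simpa using ((hasDerivAt_id x).const_mul (-α)).sub_const β
    have h : HasDerivAt
        (fun x => (-α * x - β) * iteratedDeriv (k + 1) f x - α * (k + 1) * iteratedDeriv k f x)
        ((-α * iteratedDeriv (k + 1) f x + (-α * x - β) * iteratedDeriv (k + 2) f x)
          - α * (k + 1) * iteratedDeriv (k + 1) f x) x :=
      (hlin.mul (hderiv (k + 1) x)).sub ((hderiv k x).const_mul (α * (k + 1)))
    rw [h.deriv]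
    push_cast
    ring

lemma aux_iter_add (p q : Polynomial ℝ) (k : ℕ) :
    derivative^[k] (p + q) = derivative^[k] p + derivative^[k] q := by
  induction k generalizing p q with
  | zero => simp
  | succ k ih => rw [Function.iterate_succ_apply, derivative_add, ih,
      Function.iterate_succ_apply, Function.iterate_succ_apply]

lemma aux_leibniz (p : Polynomial ℝ) (k : ℕ) :
    derivative^[k + 1] (X * p) =
      X * derivative^[k + 1] p + C ((k : ℝ) + 1) * derivative^[k] p := by
  induction k generalizing p with
  | zero => simp [derivative_mul]; ring
  | succ k ih =>
    rw [Function.iterate_succ_apply, derivative_mul, derivative_X, one_mul,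
      aux_iter_add, ih (derivative p)]
    rw [show derivative^[k + 1] (derivative p) = derivative^[k + 2] p from
      (Function.iterate_succ_apply derivative (k+1) p).symm]
    rw [show derivative^[k] (derivative p) = derivative^[k + 1] p from
      (Function.iterate_succ_apply derivative k p).symm]
    push_cast
    simp only [C_add, C_1]
    ring

theorem stmt_6 (α β : ℝ) (γ : ℕ → ℝ)
    (hγ : ∀ k : ℕ, γ k =
      iteratedDeriv k (fun x : ℝ => Real.exp (-(α / 2) * x ^ 2 - β * x)) 0)
    (H : ℕ → Polynomial ℝ) (hH0 : H 0 = 1) (hH1 : H 1 = Polynomial.X)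
    (hH : ∀ n : ℕ, 2 ≤ n →
      H n = Polynomial.X * H (n - 1) - Polynomial.C (α * ((n : ℝ) - 1)) * H (n - 2)) :
    ∀ n : ℕ,
      ∑ k ∈ Finset.range (n + 1),
        Polynomial.C (γ k / (k.factorial : ℝ)) * Polynomial.derivative^[k] (Polynomial.X ^ n)
      = (H n).comp (Polynomial.X - Polynomial.C β) := by
  have hγ0 : γ 0 = 1 := by
    rw [hγ, iteratedDeriv_zero]
    norm_num
  have hγ1 : γ 1 = -β := by
    rw [hγ, aux_iter1 α β]
    norm_num
  have hγrec : ∀ k : ℕ, γ (k + 2) = -β * γ (k + 1) - α * ((k : ℝ) + 1) * γ k := by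
    intro k
    simp only [hγ]
    rw [aux_iter α β k]
    norm_num
  set c : ℕ → ℝ := fun k => γ k / (k.factorial : ℝ) with hc
  have hfac : ∀ k : ℕ, ((k.factorial : ℝ)) ≠ 0 := fun k =>
    Nat.cast_ne_zero.mpr k.factorial_ne_zero
  have hc0 : c 0 = 1 := by simp [hc, hγ0]
  have hc1 : c 1 = -β * c 0 := by simp [hc, hγ1, hγ0]
  have hcrec : ∀ j : ℕ, ((j : ℝ) + 1 + 1) * c (j + 1 + 1) = -β * c (j + 1) - α * c j := by
    intro j
    simp only [hc]
    rw [show j + 1 + 1 = j + 2 from rfl, hγrec j]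
    rw [Nat.factorial_succ (j + 1), Nat.factorial_succ j]
    push_cast
    field_simp
  -- the key recurrence for the sums
  have key : ∀ m : ℕ,
      (∑ k ∈ Finset.range (m + 3), C (c k) * derivative^[k] ((X : ℝ[X]) ^ (m + 2)))
      = (X - C β) * (∑ k ∈ Finset.range (m + 2), C (c k) * derivative^[k] ((X : ℝ[X]) ^ (m + 1)))
        - C (α * ((m : ℝ) + 1)) *
          (∑ k ∈ Finset.range (m + 1), C (c k) * derivative^[k] ((X : ℝ[X]) ^ m)) := by
    intro m
    set S1 : ℝ[X] := ∑ k ∈ Finset.range (m + 2), C (c k) * derivative^[k] ((X : ℝ[X]) ^ (m + 1))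
      with hS1
    set S0 : ℝ[X] := ∑ k ∈ Finset.range (m + 1), C (c k) * derivative^[k] ((X : ℝ[X]) ^ m)
      with hS0
    have hpeel : S1 = (∑ i ∈ Finset.range (m + 1),
        C (c (i + 1)) * derivative^[i + 1] ((X : ℝ[X]) ^ (m + 1))) + C (c 0) * X ^ (m + 1) := by
      rw [hS1, Finset.sum_range_succ']
      simp
    have hz : derivative^[m + 1 + 1] ((X : ℝ[X]) ^ (m + 1)) = 0 := by
      rw [iterate_derivative_X_pow_eq_natCast_mul]
      rw [Nat.descFactorial_eq_zero_iff_lt.mpr (by omega)]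
      simp
    have hsum2 : ∑ j ∈ Finset.range (m + 1), C (c j) * derivative^[j + 1] ((X : ℝ[X]) ^ (m + 1))
        = C ((m : ℝ) + 1) * S0 := by
      rw [hS0, Finset.mul_sum]
      refine Finset.sum_congr rfl fun j _ => ?_
      rw [Function.iterate_succ_apply, derivative_X_pow]
      rw [show m + 1 - 1 = m from rfl]
      rw [show ((m + 1 : ℕ) : ℝ) = (m : ℝ) + 1 by push_cast; ring]
      rw [iterate_derivative_C_mul]
      ring
    have step1 : ∑ k ∈ Finset.range (m + 3), C (c k) * derivative^[k] ((X : ℝ[X]) ^ (m + 2))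
        = (∑ i ∈ Finset.range (m + 2),
            (C (c (i + 1)) * (X * derivative^[i + 1] ((X : ℝ[X]) ^ (m + 1)))
              + C (((i : ℝ) + 1) * c (i + 1)) * derivative^[i] ((X : ℝ[X]) ^ (m + 1))))
          + C (c 0) * (X * X ^ (m + 1)) := by
      rw [show ((X : ℝ[X]) ^ (m + 2)) = X * X ^ (m + 1) by ring, Finset.sum_range_succ']
      congr 1
      refine Finset.sum_congr rfl fun i _ => ?_
      rw [aux_leibniz, C_mul]
      ring
    have step2 : (∑ i ∈ Finset.range (m + 2),
          C (c (i + 1)) * (X * derivative^[i + 1] ((X : ℝ[X]) ^ (m + 1))))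
          + C (c 0) * (X * X ^ (m + 1)) = X * S1 := by
      rw [Finset.sum_range_succ, hz, mul_zero, mul_zero, add_zero, hpeel, mul_add,
        Finset.mul_sum]
      have hsw : ∀ i ∈ Finset.range (m + 1),
          C (c (i + 1)) * (X * derivative^[i + 1] ((X : ℝ[X]) ^ (m + 1)))
          = X * (C (c (i + 1)) * derivative^[i + 1] ((X : ℝ[X]) ^ (m + 1))) := fun i _ => by ring
      rw [Finset.sum_congr rfl hsw]
      ring
    have step3 : (∑ i ∈ Finset.range (m + 2),
          C (((i : ℝ) + 1) * c (i + 1)) * derivative^[i] ((X : ℝ[X]) ^ (m + 1)))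
        = -(C β) * S1 - C α * (C ((m : ℝ) + 1) * S0) := by
      rw [Finset.sum_range_succ']
      have hterm : ∀ j ∈ Finset.range (m + 1),
          C ((((j + 1 : ℕ) : ℝ) + 1) * c (j + 1 + 1)) * derivative^[j + 1] ((X : ℝ[X]) ^ (m + 1))
          = -(C β) * (C (c (j + 1)) * derivative^[j + 1] ((X : ℝ[X]) ^ (m + 1)))
            - C α * (C (c j) * derivative^[j + 1] ((X : ℝ[X]) ^ (m + 1))) := by
        intro j _
        rw [show (((j + 1 : ℕ) : ℝ) + 1) * c (j + 1 + 1) = -β * c (j + 1) - α * c j by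
          push_cast; rw [← hcrec j]]
        simp only [C_sub, C_mul, C_neg]
        ring
      rw [Finset.sum_congr rfl hterm, Finset.sum_sub_distrib, ← Finset.mul_sum, ← Finset.mul_sum,
        hsum2]
      have : (∑ j ∈ Finset.range (m + 1),
          C (c (j + 1)) * derivative^[j + 1] ((X : ℝ[X]) ^ (m + 1)))
          = S1 - C (c 0) * X ^ (m + 1) := by
        rw [hpeel]; ring
      rw [this]
      simp only [Function.iterate_zero_apply]
      rw [show ((0 : ℕ) : ℝ) + 1 = 1 by norm_num, one_mul, hc1]
      simp only [C_mul, C_neg]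
      ring
    calc ∑ k ∈ Finset.range (m + 3), C (c k) * derivative^[k] ((X : ℝ[X]) ^ (m + 2))
        = ((∑ i ∈ Finset.range (m + 2),
              C (c (i + 1)) * (X * derivative^[i + 1] ((X : ℝ[X]) ^ (m + 1))))
            + C (c 0) * (X * X ^ (m + 1)))
          + (∑ i ∈ Finset.range (m + 2),
              C (((i : ℝ) + 1) * c (i + 1)) * derivative^[i] ((X : ℝ[X]) ^ (m + 1))) := by
          rw [step1, Finset.sum_add_distrib]
          ring
      _ = X * S1 + (-(C β) * S1 - C α * (C ((m : ℝ) + 1) * S0)) := by rw [step2, step3]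
      _ = (X - C β) * S1 - C (α * ((m : ℝ) + 1)) * S0 := by rw [C_mul]; ring
  intro n
  simp only [show ∀ k : ℕ, γ k / (k.factorial : ℝ) = c k from fun k => rfl]
  induction n using Nat.strong_induction_on with
  | _ n ih =>
    cases n with
    | zero => simp [hH0, hc0]
    | succ n' =>
      cases n' with
      | zero =>
        rw [Finset.sum_range_succ, Finset.sum_range_one, Function.iterate_zero_apply, pow_one,
          Function.iterate_one, derivative_X, hc1, hc0, hH1, X_comp]
        simp [C_neg]
        ring
      | succ m =>
        rw [show m + 1 + 1 + 1 = m + 3 from rfl, key m,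
          ih (m + 1) (by omega), ih m (by omega), hH (m + 2) (by omega)]
        rw [show m + 2 - 1 = m + 1 from rfl, show m + 2 - 2 = m from rfl]
        simp only [sub_comp, mul_comp, X_comp, C_comp]
        rw [show α * (((m + 2 : ℕ) : ℝ) - 1) = α * ((m : ℝ) + 1) by push_cast; ring]
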